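/- Fix a, β ∈ (0, π). Let I ⊆ (0, π) be an open interval and b, α : I → (0, π) functions such that for every c ∈ I: cos(b(c)) = cos c · cos a + sin c · sin a · cos β, and cos a = cos(b(c)) · cos c + sin(b(c)) · sin c · cos(α(c)). Then α is differentiable on I with α′(c) = − sin(α(c)) · cos(b(c)) / sin(b(c)) for every c ∈ I. -/

import Mathlib

open Real Set

/-- Spherical trigonometry: with `a, β` fixed and `b`, `α` determined by the cosine
laws as functions of the side `c`, one has `∂α/∂c = - sin α · cos b / sin b`. -/
theorem stmt_8 (a β : ℝ) (ha : a ∈ Ioo 0 π) (hβ : β ∈ Ioo 0 π)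
    (lo hi : ℝ) (hI : Ioo lo hi ⊆ Ioo 0 π)
    (b α : ℝ → ℝ)
    (hb : ∀ c ∈ Ioo lo hi, b c ∈ Ioo 0 π)
    (hα : ∀ c ∈ Ioo lo hi, α c ∈ Ioo 0 π)
    (law1 : ∀ c ∈ Ioo lo hi, cos (b c) = cos c * cos a + sin c * sin a * cos β)
    (law2 : ∀ c ∈ Ioo lo hi, cos a = cos (b c) * cos c + sin (b c) * sin c * cos (α c)) :
    ∀ c ∈ Ioo lo hi, HasDerivAt α (-(sin (α c) * cos (b c)) / sin (b c)) c := by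
  set F : ℝ → ℝ := fun x => cos x * cos a + sin x * (sin a * cos β) with hFdef
  set G : ℝ → ℝ := fun x => (cos a - F x * cos x) / (Real.sqrt (1 - (F x)^2) * sin x)
    with hGdef
  have key : ∀ x ∈ Ioo lo hi, F x = cos (b x) ∧ Real.sqrt (1 - (F x)^2) = sin (b x) ∧
      G x = cos (α x) := by
    intro x hx
    obtain ⟨hx0, hxπ⟩ := hI hx
    have hsx : 0 < sin x := sin_pos_of_pos_of_lt_pi hx0 hxπ
    obtain ⟨hb0, hbπ⟩ := hb x hx
    have hsb : 0 < sin (b x) := sin_pos_of_pos_of_lt_pi hb0 hbπ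
    have hFx : F x = cos (b x) := by
      rw [hFdef]; simp only; rw [law1 x hx]; ring
    have hsq : Real.sqrt (1 - (F x)^2) = sin (b x) := by
      rw [hFx]
      have h1 : 1 - cos (b x) ^ 2 = sin (b x) ^ 2 := by
        nlinarith [sin_sq_add_cos_sq (b x)]
      rw [h1, Real.sqrt_sq hsb.le]
    refine ⟨hFx, hsq, ?_⟩
    rw [hGdef]; simp only; rw [hsq, hFx]
    rw [law2 x hx]
    field_simp
    ring
  intro c hc
  obtain ⟨hc0, hcπ⟩ := hI hc
  have hsc : 0 < sin c := sin_pos_of_pos_of_lt_pi hc0 hcπ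
  obtain ⟨hb0, hbπ⟩ := hb c hc
  obtain ⟨hα0, hαπ⟩ := hα c hc
  have hsb : 0 < sin (b c) := sin_pos_of_pos_of_lt_pi hb0 hbπ
  have hsA : 0 < sin (α c) := sin_pos_of_pos_of_lt_pi hα0 hαπ
  obtain ⟨hFc, hsqF, hGc⟩ := key c hc
  have hF2 : (F c)^2 < 1 := by
    rw [hFc]; nlinarith [sin_sq_add_cos_sq (b c)]
  have hG2 : (G c)^2 < 1 := by
    rw [hGc]; nlinarith [sin_sq_add_cos_sq (α c)]
  have hsqG : Real.sqrt (1 - (G c)^2) = sin (α c) := by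
    rw [hGc]
    have h1 : 1 - cos (α c) ^ 2 = sin (α c) ^ 2 := by
      nlinarith [sin_sq_add_cos_sq (α c)]
    rw [h1, Real.sqrt_sq hsA.le]
  -- eventual equality of α with arccos ∘ G
  have hev : α =ᶠ[nhds c] fun x => Real.arccos (G x) := by
    filter_upwards [Ioo_mem_nhds hc.1 hc.2] with x hx
    obtain ⟨_, _, hGx⟩ := key x hx
    obtain ⟨hα0', hαπ'⟩ := hα x hx
    rw [hGx, Real.arccos_cos hα0'.le hαπ'.le]
  -- derivatives
  have hF' : HasDerivAt F (-sin c * cos a + cos c * (sin a * cos β)) c := by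
    have h1 := (Real.hasDerivAt_cos c).mul_const (cos a)
    have h2 := (Real.hasDerivAt_sin c).mul_const (sin a * cos β)
    exact (h1.add h2).congr_deriv (by ring)
  set f' : ℝ := -sin c * cos a + cos c * (sin a * cos β) with hf'def
  have h1m : HasDerivAt (fun x => 1 - (F x)^2) (-(2 * F c * f')) c := by
    have := (hasDerivAt_const c (1:ℝ)).sub (hF'.pow 2)
    exact this.congr_deriv (by norm_num)
  have hsqrt : HasDerivAt (fun x => Real.sqrt (1 - (F x)^2))
      (-(2 * F c * f') / (2 * Real.sqrt (1 - (F c)^2))) c := by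
    exact h1m.sqrt (by nlinarith)
  have hD : HasDerivAt (fun x => Real.sqrt (1 - (F x)^2) * sin x)
      (-(2 * F c * f') / (2 * Real.sqrt (1 - (F c)^2)) * sin c
        + Real.sqrt (1 - (F c)^2) * cos c) c := hsqrt.mul (Real.hasDerivAt_sin c)
  have hN : HasDerivAt (fun x => cos a - F x * cos x)
      (0 - (f' * cos c + F c * (-sin c))) c :=
    (hasDerivAt_const c (cos a)).sub (hF'.mul (Real.hasDerivAt_cos c))
  have hDne : Real.sqrt (1 - (F c)^2) * sin c ≠ 0 := by
    rw [hsqF]; positivity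
  have hG' : HasDerivAt G
      (((0 - (f' * cos c + F c * (-sin c))) * (Real.sqrt (1 - (F c)^2) * sin c)
        - (cos a - F c * cos c) * (-(2 * F c * f') / (2 * Real.sqrt (1 - (F c)^2)) * sin c
          + Real.sqrt (1 - (F c)^2) * cos c)) / (Real.sqrt (1 - (F c)^2) * sin c)^2) c :=
    hN.div hD hDne
  have hGne1 : G c ≠ -1 := by nlinarith
  have hGne2 : G c ≠ 1 := by nlinarith
  have harc := (Real.hasDerivAt_arccos hGne1 hGne2).comp c hG'
  refine HasDerivAt.congr_of_eventuallyEq ?_ hev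
  refine harc.congr_deriv ?_
  symm
  rw [hsqG, hsqF, hFc]
  -- algebra
  have law1c := law1 c hc
  have law2c := law2 c hc
  have hm : sin c * (sin a * cos β) = cos (b c) - cos c * cos a := by
    rw [law1c]; ring
  have hf'v : f' * sin c = cos (b c) * cos c - cos a := by
    rw [hf'def]
    have pc := sin_sq_add_cos_sq c
    linear_combination cos c * hm - cos a * pc
  have hGcv : cos a - cos (b c) * cos c = sin (b c) * sin c * cos (α c) := by
    rw [law2c]; ring
  have hf'v2 : f' = -(sin (b c) * cos (α c)) := by
    have : f' * sin c = -(sin (b c) * cos (α c)) * sin c := by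
      rw [hf'v]; linear_combination -hGcv
    exact mul_right_cancel₀ (ne_of_gt hsc) this
  rw [hf'v2, hGcv]
  have pA := sin_sq_add_cos_sq (α c)
  field_simp
  linear_combination (-cos (b c) * sin c) * pA
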